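/- Let E be a real normed vector space and a, b, w ∈ E. For s ∈ ℝ define f_s : ℝ → E by f_s(t) = (1−t)•a + t•b + (s · Real.sin (π·t))•w. Then the function s ↦ eVariationOn f_s (Set.Icc 0 1) tends to ENNReal.ofReal (dist a b) as s → 0. -/

import Mathlib

open Real Set

lemma abs_sin_sub_sin_le (x y : ℝ) : |Real.sin x - Real.sin y| ≤ |x - y| := by
  have habs : ∀ z : ℝ, |Real.sin z| ≤ |z| := by
    intro z
    rcases eq_or_ne z 0 with h | h
    · simp [h]
    · exact (Real.abs_sin_lt_abs h).le
  rw [Real.sin_sub_sin]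
  calc |2 * Real.sin ((x - y) / 2) * Real.cos ((x + y) / 2)|
      = 2 * |Real.sin ((x - y) / 2)| * |Real.cos ((x + y) / 2)| := by
        rw [abs_mul, abs_mul, abs_two]
    _ ≤ 2 * |(x - y) / 2| * 1 := by
        apply mul_le_mul (by nlinarith [habs ((x - y) / 2)])
          (Real.abs_cos_le_one _) (abs_nonneg _) (by positivity)
    _ = |x - y| := by rw [abs_div, abs_two]; ring

lemma eVariationOn_le_of_lipschitz {E : Type*} [NormedAddCommGroup E]
    {f : ℝ → E} {K : NNReal} (hf : LipschitzWith K f) :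
    eVariationOn f (Set.Icc (0:ℝ) 1) ≤ (K : ENNReal) := by
  have h1 : eVariationOn f (Set.Icc (0:ℝ) 1)
      ≤ (K : ENNReal) * eVariationOn id (Set.Icc (0:ℝ) 1) :=
    (lipschitzOnWith_univ.mpr hf).comp_eVariationOn_le (Set.mapsTo_univ _ _)
  have h2 : eVariationOn (id : ℝ → ℝ) (Set.Icc (0:ℝ) 1) ≤ ENNReal.ofReal 1 := by
    have := (monotoneOn_id (s := Set.Icc (0:ℝ) 1)).eVariationOn_le
      (a := 0) (b := 1) (by simp) (by simp)
    simpa [Set.inter_self] using this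
  calc eVariationOn f (Set.Icc (0:ℝ) 1)
      ≤ (K : ENNReal) * eVariationOn id (Set.Icc (0:ℝ) 1) := h1
    _ ≤ (K : ENNReal) * ENNReal.ofReal 1 := by exact mul_le_mul_right h2 _
    _ = K := by simp

/-- The lengths of the perturbed linear paths
`f_s(t) = (1-t)•a + t•b + (s·sin(πt))•w` tend to `dist a b` as `s → 0`. -/
theorem length_perturbed_tendsto_dist
    {E : Type*} [NormedAddCommGroup E] [NormedSpace ℝ E] (a b w : E) :
    Filter.Tendsto
      (fun s : ℝ =>
        eVariationOn
          (fun t : ℝ => (1 - t) • a + t • b + (s * Real.sin (Real.pi * t)) • w)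
          (Set.Icc 0 1))
      (nhds 0) (nhds (ENNReal.ofReal (dist a b))) := by
  set F : ℝ → ℝ → E := fun s t => (1 - t) • a + t • b + (s * Real.sin (Real.pi * t)) • w
  -- lower bound
  have hlow : ∀ s : ℝ, ENNReal.ofReal (dist a b) ≤ eVariationOn (F s) (Set.Icc 0 1) := by
    intro s
    have h0 : F s 0 = a := by simp [F]
    have h1 : F s 1 = b := by simp [F, Real.sin_pi]
    have := eVariationOn.edist_le (F s) (x := (0:ℝ)) (y := 1)
      (by simp) (by simp : (1:ℝ) ∈ Set.Icc (0:ℝ) 1)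
    rw [h0, h1, edist_dist] at this
    exact this
  -- Lipschitz bound
  have hlip : ∀ s : ℝ, LipschitzWith (‖b - a‖₊ + ‖s‖₊ * Real.pi.toNNReal * ‖w‖₊) (F s) := by
    intro s
    apply LipschitzWith.of_dist_le_mul
    intro x y
    have key : F s x - F s y = (x - y) • (b - a)
        + (s * (Real.sin (Real.pi * x) - Real.sin (Real.pi * y))) • w := by
      simp only [F]
      module
    rw [dist_eq_norm, key]
    have hsin : |Real.sin (Real.pi * x) - Real.sin (Real.pi * y)| ≤ Real.pi * |x - y| := by
      have := _root_.abs_sin_sub_sin_le (Real.pi * x) (Real.pi * y)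
      calc |Real.sin (Real.pi * x) - Real.sin (Real.pi * y)| ≤ |Real.pi * x - Real.pi * y| := this
        _ = Real.pi * |x - y| := by
            rw [← mul_sub, abs_mul, abs_of_nonneg Real.pi_pos.le]
    have hπ : Real.pi.toNNReal = (⟨Real.pi, Real.pi_pos.le⟩ : NNReal) := by
      ext; simp [Real.toNNReal, Real.pi_pos.le]; rfl
    calc ‖(x - y) • (b - a) + (s * (Real.sin (Real.pi * x) - Real.sin (Real.pi * y))) • w‖
        ≤ ‖(x - y) • (b - a)‖ + ‖(s * (Real.sin (Real.pi * x) - Real.sin (Real.pi * y))) • w‖ :=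
          norm_add_le _ _
      _ = |x - y| * ‖b - a‖ + |s| * |Real.sin (Real.pi * x) - Real.sin (Real.pi * y)| * ‖w‖ := by
          rw [norm_smul, norm_smul, Real.norm_eq_abs, Real.norm_eq_abs, abs_mul]
      _ ≤ |x - y| * ‖b - a‖ + |s| * (Real.pi * |x - y|) * ‖w‖ := by
          gcongr
      _ = (‖b - a‖ + |s| * Real.pi * ‖w‖) * |x - y| := by ring
      _ = ((‖b - a‖₊ + ‖s‖₊ * Real.pi.toNNReal * ‖w‖₊ : NNReal) : ℝ) * dist x y := by
          rw [Real.dist_eq]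
          push_cast [hπ]
          simp [Real.norm_eq_abs]
          exact Or.inl (Or.inl rfl)
  have hup : ∀ s : ℝ, eVariationOn (F s) (Set.Icc 0 1)
      ≤ ((‖b - a‖₊ + ‖s‖₊ * Real.pi.toNNReal * ‖w‖₊ : NNReal) : ENNReal) :=
    fun s => eVariationOn_le_of_lipschitz (hlip s)
  -- squeeze
  apply tendsto_of_tendsto_of_tendsto_of_le_of_le
    (g := fun _ : ℝ => ENNReal.ofReal (dist a b))
    (h := fun s : ℝ => ((‖b - a‖₊ + ‖s‖₊ * Real.pi.toNNReal * ‖w‖₊ : NNReal) : ENNReal))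
    tendsto_const_nhds ?_ hlow hup
  have hcont : Filter.Tendsto
      (fun s : ℝ => (‖b - a‖₊ + ‖s‖₊ * Real.pi.toNNReal * ‖w‖₊ : NNReal))
      (nhds 0) (nhds (‖b - a‖₊)) := by
    have : Filter.Tendsto (fun s : ℝ => ‖s‖₊) (nhds 0) (nhds 0) := by
      simpa using (continuous_nnnorm (E := ℝ)).tendsto 0
    have h2 := ((this.mul_const Real.pi.toNNReal).mul_const ‖w‖₊)
    simpa using (tendsto_const_nhds.add h2 :)
  have := (ENNReal.tendsto_coe.mpr hcont)
  convert this using 2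
  rw [dist_eq_norm, norm_sub_rev]; exact ofReal_norm _
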